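/- For a nontrivial graph G of order n, β(G) + β(Ḡ) = 2n − 1 if and only if G is isomorphic to the complete graph K_n or to its complement, the edgeless graph on n vertices. -/

import Mathlib

open SimpleGraph

def IsLocatingSet {V : Type*} (G : SimpleGraph V) (S : Set V) : Prop :=
  (∀ v ∉ S, ∃ x ∈ S, G.edist v x ≠ ⊤) ∧
  ∀ u v : V, u ≠ v → ∃ x ∈ S, G.edist u x ≠ G.edist v x

noncomputable def locNum {V : Type*} [Fintype V] (G : SimpleGraph V) : ℕ :=
  sInf {k | ∃ S : Set V, IsLocatingSet G S ∧ S.ncard = k}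

lemma edist_self_ne {V : Type*} (G : SimpleGraph V) {a b : V} (h : a ≠ b) :
    G.edist a a ≠ G.edist b a := by
  rw [G.edist_self]
  exact fun h2 => h ((G.edist_eq_zero_iff).mp h2.symm).symm

lemma univ_locating {V : Type*} (G : SimpleGraph V) : IsLocatingSet G Set.univ :=
  ⟨fun v hv => absurd (Set.mem_univ v) hv,
   fun u v huv => ⟨u, Set.mem_univ u, edist_self_ne G huv⟩⟩

lemma compl_locating {V : Type*} (G : SimpleGraph V) {u w : V} (h : G.Adj u w) :
    IsLocatingSet G ({u}ᶜ : Set V) := by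
  constructor
  · intro v hv
    simp only [Set.mem_compl_iff, Set.mem_singleton_iff, not_not] at hv
    subst hv
    exact ⟨w, by simp [h.ne'], by rw [G.edist_ne_top_iff_reachable]; exact h.reachable⟩
  · intro a b hab
    by_cases ha : a = u
    · subst ha
      exact ⟨b, by simp [hab.symm], fun h2 => edist_self_ne G hab.symm h2.symm⟩
    · exact ⟨a, by simp [ha], edist_self_ne G hab⟩

lemma locNum_le_of_adj {V : Type*} [Fintype V] (G : SimpleGraph V) {u w : V}
    (h : G.Adj u w) : locNum G ≤ Fintype.card V - 1 := by
  classical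
  apply Nat.sInf_le
  refine ⟨({u}ᶜ : Set V), compl_locating G h, ?_⟩
  rw [Set.ncard_eq_toFinset_card']
  simp [Finset.card_compl]

lemma locNum_bot {V : Type*} [Fintype V] :
    locNum (⊥ : SimpleGraph V) = Fintype.card V := by
  have hu : (Set.univ : Set V).ncard = Fintype.card V := by
    rw [Set.ncard_univ, Nat.card_eq_fintype_card]
  apply le_antisymm
  · exact Nat.sInf_le ⟨Set.univ, univ_locating _, hu⟩
  · refine le_csInf ⟨Fintype.card V, Set.univ, univ_locating _, hu⟩ ?_
    rintro k ⟨S, ⟨h1, _⟩, rfl⟩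
    have hS : S = Set.univ := by
      ext v
      simp only [Set.mem_univ, iff_true]
      by_contra hv
      obtain ⟨x, hx, hne⟩ := h1 v hv
      apply hne
      apply edist_eq_top_of_not_reachable
      rw [reachable_bot]
      rintro rfl
      exact hv hx
    rw [hS, hu]

lemma locNum_top {V : Type*} [Fintype V] (hn : 2 ≤ Fintype.card V) :
    locNum (⊤ : SimpleGraph V) = Fintype.card V - 1 := by
  have hu : (Set.univ : Set V).ncard = Fintype.card V := by
    rw [Set.ncard_univ, Nat.card_eq_fintype_card]
  obtain ⟨u, w, huw⟩ := Fintype.exists_pair_of_one_lt_card hn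
  apply le_antisymm
  · exact locNum_le_of_adj _ ((top_adj u w).mpr huw)
  · refine le_csInf ⟨Fintype.card V, Set.univ, univ_locating _, hu⟩ ?_
    rintro k ⟨S, ⟨_, h2⟩, rfl⟩
    by_contra hk
    push_neg at hk
    have hsum : S.ncard + Sᶜ.ncard = Fintype.card V := by
      rw [Set.ncard_add_ncard_compl, Nat.card_eq_fintype_card]
    have hcompl : 1 < Sᶜ.ncard := by omega
    obtain ⟨a, b, ha, hb, hab⟩ := (Set.one_lt_ncard_iff).mp hcompl
    obtain ⟨x, hx, hne⟩ := h2 a b hab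
    have hax : (⊤ : SimpleGraph V).edist a x = 1 := by
      rw [edist_eq_one_iff_adj, top_adj]
      rintro rfl; exact ha hx
    have hbx : (⊤ : SimpleGraph V).edist b x = 1 := by
      rw [edist_eq_one_iff_adj, top_adj]
      rintro rfl; exact hb hx
    exact hne (hax.trans hbx.symm)

theorem locNum_sum_eq_max_iff {V : Type*} [Fintype V] (G : SimpleGraph V)
    (hn : 2 ≤ Fintype.card V) :
    locNum G + locNum Gᶜ = 2 * Fintype.card V - 1 ↔
      Nonempty (G ≃g (⊤ : SimpleGraph (Fin (Fintype.card V)))) ∨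
      Nonempty (G ≃g (⊥ : SimpleGraph (Fin (Fintype.card V)))) := by
  classical
  have hct : (⊤ : SimpleGraph V)ᶜ = ⊥ := by ext u v; simp [compl_adj]
  have hcb : (⊥ : SimpleGraph V)ᶜ = ⊤ := by ext u v; simp [compl_adj]
  constructor
  · intro h
    by_contra hc
    push_neg at hc
    obtain ⟨h1, h2⟩ := hc
    have hGtop : G ≠ ⊤ := by
      rintro rfl
      exact (not_nonempty_iff.mpr h1) ⟨⟨Fintype.equivFin V, by simp⟩⟩
    have hGbot : G ≠ ⊥ := by
      rintro rfl
      exact (not_nonempty_iff.mpr h2) ⟨⟨Fintype.equivFin V, by simp⟩⟩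
    have hadj : ∃ u w, G.Adj u w := by
      by_contra hno
      push_neg at hno
      exact hGbot (by ext u v; simp [hno u v])
    have hadjc : ∃ u w, Gᶜ.Adj u w := by
      by_contra hno
      push_neg at hno
      apply hGtop
      ext u v
      simp only [compl_adj, not_and, not_not] at hno
      simp only [top_adj]
      exact ⟨fun h => h.ne, fun h => hno u v h⟩
    obtain ⟨u1, w1, ha1⟩ := hadj
    obtain ⟨u2, w2, ha2⟩ := hadjc
    have l1 := locNum_le_of_adj G ha1
    have l2 := locNum_le_of_adj Gᶜ ha2
    omega
  · intro hiso
    obtain hf | hf := hiso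
    · obtain ⟨f⟩ := hf
      have hG : G = ⊤ := by
        ext u v
        rw [top_adj]
        constructor
        · exact fun h => h.ne
        · intro h
          rw [← f.map_rel_iff]
          simp only [top_adj, ne_eq]
          exact fun h2 => h (f.toEquiv.injective h2)
      rw [hG, hct, locNum_top hn, locNum_bot]
      omega
    · obtain ⟨f⟩ := hf
      have hG : G = ⊥ := by
        ext u v
        constructor
        · intro h
          exact absurd (f.map_rel_iff.mpr h) (by simp)
        · exact fun h => absurd h (by simp)
      rw [hG, hcb, locNum_top hn, locNum_bot]
      omega
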